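/- Let φ : M_d(ℂ) → M_d(ℂ) be a ℂ-linear map in Holevo form. Let A ∈ M_d(ℂ) be positive semidefinite with rank r < d, and set s = rank φ(A). If r² + s² < 2dr, then the kernel of φ (as a ℂ-linear endomorphism of M_d(ℂ)) has complex dimension at least 2dr − r² − s² > 0. -/

import Mathlib

open Matrix Kronecker
open scoped ComplexOrder

/-- A bipartite matrix on `ℂ^{d₁} ⊗ ℂ^{d₂}` is separable if it is a finite sum of
Kronecker products of positive semidefinite matrices. -/
def MatSep {d₁ d₂ : ℕ} (ρ : Matrix (Fin d₁ × Fin d₂) (Fin d₁ × Fin d₂) ℂ) : Prop :=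
  ∃ (k : ℕ) (A : Fin k → Matrix (Fin d₁) (Fin d₁) ℂ) (B : Fin k → Matrix (Fin d₂) (Fin d₂) ℂ),
    (∀ i, (A i).PosSemidef) ∧ (∀ i, (B i).PosSemidef) ∧ ρ = ∑ i, A i ⊗ₖ B i

/-- Holevo form: `φ(X) = Σ_k Tr(E_k X) ρ_k` with all `ρ_k`, `E_k` positive semidefinite.
(Equivalently, φ is entanglement-breaking.) -/
def HolevoForm {d : ℕ} (φ : Matrix (Fin d) (Fin d) ℂ →ₗ[ℂ] Matrix (Fin d) (Fin d) ℂ) : Prop :=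
  ∃ (k : ℕ) (ρ E : Fin k → Matrix (Fin d) (Fin d) ℂ),
    (∀ i, (ρ i).PosSemidef) ∧ (∀ i, (E i).PosSemidef) ∧
      ∀ X, φ X = ∑ i, (E i * X).trace • ρ i

namespace StmtAux3

lemma sum_mulVec' {k d : ℕ} (M : Fin k → Matrix (Fin d) (Fin d) ℂ) (v : Fin d → ℂ) :
    (∑ i, M i) *ᵥ v = ∑ i, M i *ᵥ v := by
  ext j
  simp only [Matrix.mulVec, dotProduct, Matrix.sum_apply, Finset.sum_apply,
    Finset.sum_mul]
  rw [Finset.sum_comm]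

lemma dotProduct_sum' {k d : ℕ} (v : Fin d → ℂ) (w : Fin k → (Fin d → ℂ)) :
    v ⬝ᵥ (∑ i, w i) = ∑ i, v ⬝ᵥ w i := by
  simp only [dotProduct, Finset.sum_apply, Finset.mul_sum]
  rw [Finset.sum_comm]

lemma trace_ctms_nonneg {d : ℕ} (M : Matrix (Fin d) (Fin d) ℂ) : 0 ≤ (Mᴴ * M).trace := by
  rw [Matrix.trace]
  refine Finset.sum_nonneg fun i _ => ?_
  rw [Matrix.diag_apply, Matrix.mul_apply]
  refine Finset.sum_nonneg fun l _ => ?_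
  simpa [Matrix.conjTranspose_apply] using star_mul_self_nonneg (M l i)

lemma eq_zero_of_trace_ctms {d : ℕ} {M : Matrix (Fin d) (Fin d) ℂ}
    (h : (Mᴴ * M).trace = 0) : M = 0 := by
  rw [Matrix.trace] at h
  have h1 : ∀ i ∈ Finset.univ, (0:ℂ) ≤ (Mᴴ * M).diag i := fun i _ => by
    rw [Matrix.diag_apply, Matrix.mul_apply]
    refine Finset.sum_nonneg fun l _ => ?_
    simpa [Matrix.conjTranspose_apply] using star_mul_self_nonneg (M l i)
  ext l i
  have h2 := (Finset.sum_eq_zero_iff_of_nonneg h1).mp h i (Finset.mem_univ i)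
  rw [Matrix.diag_apply, Matrix.mul_apply] at h2
  have h3 : ∀ l ∈ Finset.univ, (0:ℂ) ≤ Mᴴ i l * M l i := fun l _ => by
    simpa [Matrix.conjTranspose_apply] using star_mul_self_nonneg (M l i)
  have h4 := (Finset.sum_eq_zero_iff_of_nonneg h3).mp h2 l (Finset.mem_univ l)
  rw [Matrix.conjTranspose_apply] at h4
  rcases mul_eq_zero.mp h4 with h5 | h5
  · simpa using star_eq_zero.mp h5
  · simpa using h5

lemma trace_swap {d : ℕ} (B C : Matrix (Fin d) (Fin d) ℂ) :
    ((Bᴴ * B) * (Cᴴ * C)).trace = ((B * Cᴴ)ᴴ * (B * Cᴴ)).trace := by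
  rw [conjTranspose_mul, conjTranspose_conjTranspose, trace_mul_comm, Matrix.mul_assoc,
    trace_mul_comm Cᴴ]
  simp only [Matrix.mul_assoc]

lemma posSemidef_iff_eq_transpose_mul_self {d : ℕ} {A : Matrix (Fin d) (Fin d) ℂ} :
    A.PosSemidef ↔ ∃ B : Matrix (Fin d) (Fin d) ℂ, A = Bᴴ * B := by
  constructor
  · intro hA
    classical
    obtain ⟨X, hX, -, h⟩ := open scoped MatrixOrder in
      CFC.exists_sqrt_of_isSelfAdjoint_of_quasispectrumRestricts hA.isHermitian
        (QuasispectrumRestricts.nnreal_of_nonneg hA.nonneg)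
    refine ⟨X, ?_⟩
    rw [← h]
    exact congrArg (· * X) hX.star_eq.symm
  · rintro ⟨B, rfl⟩
    exact posSemidef_conjTranspose_mul_self B

lemma trace_mul_psd_nonneg {d : ℕ} {E A : Matrix (Fin d) (Fin d) ℂ}
    (hE : E.PosSemidef) (hA : A.PosSemidef) : 0 ≤ (E * A).trace := by
  obtain ⟨B, rfl⟩ := posSemidef_iff_eq_transpose_mul_self.mp hE
  obtain ⟨C, rfl⟩ := posSemidef_iff_eq_transpose_mul_self.mp hA
  rw [trace_swap]
  exact trace_ctms_nonneg _

lemma mul_eq_zero_of_trace_psd {d : ℕ} {E A : Matrix (Fin d) (Fin d) ℂ}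
    (hE : E.PosSemidef) (hA : A.PosSemidef) (h : (E * A).trace = 0) : E * A = 0 := by
  obtain ⟨B, rfl⟩ := posSemidef_iff_eq_transpose_mul_self.mp hE
  obtain ⟨C, rfl⟩ := posSemidef_iff_eq_transpose_mul_self.mp hA
  rw [trace_swap] at h
  have h0 : B * Cᴴ = 0 := eq_zero_of_trace_ctms h
  calc Bᴴ * B * (Cᴴ * C) = Bᴴ * (B * Cᴴ) * C := by simp only [Matrix.mul_assoc]
  _ = 0 := by rw [h0]; simp

lemma star_eq_self_of_nonneg {z : ℂ} (h : 0 ≤ z) : star z = z := by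
  have him := (Complex.nonneg_iff.mp h).2
  apply Complex.ext <;> simp [← him]

noncomputable def offProj {d : ℕ} (U Z : Submodule ℂ (EuclideanSpace ℂ (Fin d))) :
    Matrix (Fin d) (Fin d) ℂ →ₗ[ℂ] (↥Z →ₗ[ℂ] (EuclideanSpace ℂ (Fin d)) ⧸ U) where
  toFun X := U.mkQ ∘ₗ (Matrix.toEuclideanLin X) ∘ₗ Z.subtype
  map_add' X Y := by ext z; simp
  map_smul' c X := by ext z; simp

@[simp] lemma offProj_apply {d : ℕ} (U Z : Submodule ℂ (EuclideanSpace ℂ (Fin d)))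
    (X : Matrix (Fin d) (Fin d) ℂ) (z : ↥Z) :
    offProj U Z X z = U.mkQ (Matrix.toEuclideanLin X z) := rfl

noncomputable def restr {d : ℕ} (Z : Submodule ℂ (EuclideanSpace ℂ (Fin d))) :
    Matrix (Fin d) (Fin d) ℂ →ₗ[ℂ] (↥Z →ₗ[ℂ] EuclideanSpace ℂ (Fin d)) where
  toFun X := (Matrix.toEuclideanLin X) ∘ₗ Z.subtype
  map_add' X Y := by ext z; simp
  map_smul' c X := by ext z; simp

@[simp] lemma restr_apply {d : ℕ} (Z : Submodule ℂ (EuclideanSpace ℂ (Fin d)))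
    (X : Matrix (Fin d) (Fin d) ℂ) (z : ↥Z) :
    restr Z X z = Matrix.toEuclideanLin X z := rfl

noncomputable def compress {d : ℕ} (W : Submodule ℂ (EuclideanSpace ℂ (Fin d))) :
    Matrix (Fin d) (Fin d) ℂ →ₗ[ℂ] (↥W →ₗ[ℂ] ↥W) where
  toFun X := (W.orthogonalProjectionOnto).toLinearMap ∘ₗ (Matrix.toEuclideanLin X) ∘ₗ W.subtype
  map_add' X Y := by ext z; simp
  map_smul' c X := by ext z; simp

@[simp] lemma compress_apply {d : ℕ} (W : Submodule ℂ (EuclideanSpace ℂ (Fin d)))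
    (X : Matrix (Fin d) (Fin d) ℂ) (z : ↥W) :
    compress W X z = W.orthogonalProjectionOnto (Matrix.toEuclideanLin X z) := rfl

lemma toEuclideanLin_mul {d : ℕ} (M N : Matrix (Fin d) (Fin d) ℂ) :
    Matrix.toEuclideanLin (M * N) =
      (Matrix.toEuclideanLin M).comp (Matrix.toEuclideanLin N) :=
  Matrix.toLin_mul (PiLp.basisFun 2 ℂ (Fin d)) (PiLp.basisFun 2 ℂ (Fin d))
    (PiLp.basisFun 2 ℂ (Fin d)) M N

end StmtAux3

open StmtAux3

set_option maxHeartbeats 2000000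

/-- Image of semipositive matrices through entanglement-breaking (Holevo form) maps:
a lower bound on the dimension of the kernel. -/
theorem stmt_3 (d : ℕ) (φ : Matrix (Fin d) (Fin d) ℂ →ₗ[ℂ] Matrix (Fin d) (Fin d) ℂ)
    (hφ : HolevoForm φ) (A : Matrix (Fin d) (Fin d) ℂ) (hA : A.PosSemidef)
    (r s : ℕ) (hr : r = A.rank) (hs : s = (φ A).rank)
    (hrd : r < d) (hnum : r ^ 2 + s ^ 2 < 2 * d * r) :
    2 * d * r - r ^ 2 - s ^ 2 ≤ Module.finrank ℂ ↥(LinearMap.ker φ) := by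
  classical
  obtain ⟨k, ρ, Em, hρ, hEm, hφX⟩ := hφ
  set c : Fin k → ℂ := fun i => (Em i * A).trace with hcdef
  have hc0 : ∀ i, 0 ≤ c i := fun i => trace_mul_psd_nonneg (hEm i) hA
  set U : Submodule ℂ (EuclideanSpace ℂ (Fin d)) :=
    LinearMap.range (Matrix.toEuclideanLin A) with hUdef
  set T : EuclideanSpace ℂ (Fin d) →ₗ[ℂ] EuclideanSpace ℂ (Fin d) :=
    Matrix.toEuclideanLin (φ A) with hTdef
  set W : Submodule ℂ (EuclideanSpace ℂ (Fin d)) := LinearMap.range T with hWdef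
  have hU : Module.finrank ℂ U = r := by
    rw [hr]
    exact (Matrix.rank_eq_finrank_range_toLin A (PiLp.basisFun 2 ℂ (Fin d))
      (PiLp.basisFun 2 ℂ (Fin d))).symm
  have hW : Module.finrank ℂ W = s := by
    rw [hs]
    exact (Matrix.rank_eq_finrank_range_toLin (φ A) (PiLp.basisFun 2 ℂ (Fin d))
      (PiLp.basisFun 2 ℂ (Fin d))).symm
  -- φ A is hermitian
  have hφA : (φ A).IsHermitian := by
    rw [hφX A]
    unfold Matrix.IsHermitian
    rw [Matrix.conjTranspose_sum]
    refine Finset.sum_congr rfl fun i _ => ?_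
    rw [Matrix.conjTranspose_smul, (hρ i).1]
    congr 1
    exact star_eq_self_of_nonneg (hc0 i)
  have hsymT : T.IsSymmetric := Matrix.isHermitian_iff_isSymmetric.mp hφA
  -- kernels
  have hkerker : ∀ i, c i ≠ 0 →
      LinearMap.ker T ≤ LinearMap.ker (Matrix.toEuclideanLin (ρ i)) := by
    intro i hci v hv
    rw [LinearMap.mem_ker] at hv ⊢
    set v' : Fin d → ℂ := (WithLp.equiv 2 (Fin d → ℂ)) v with hv'def
    have hv0 : (φ A) *ᵥ v' = 0 := by
      have := congrArg (WithLp.equiv 2 (Fin d → ℂ)) hv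
      simpa [hTdef, hv'def, Matrix.toEuclideanLin_apply] using this
    have hsum : ∑ j, c j * (star v' ⬝ᵥ (ρ j *ᵥ v')) = 0 := by
      have h1 : star v' ⬝ᵥ ((φ A) *ᵥ v') = 0 := by rw [hv0, dotProduct_zero]
      rw [hφX A, sum_mulVec', dotProduct_sum'] at h1
      rw [← h1]
      refine Finset.sum_congr rfl fun j _ => ?_
      rw [Matrix.smul_mulVec, dotProduct_smul]
      rfl
    have hterm : ∀ j ∈ Finset.univ, (0:ℂ) ≤ c j * (star v' ⬝ᵥ (ρ j *ᵥ v')) := fun j _ =>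
      mul_nonneg (hc0 j) ((hρ j).dotProduct_mulVec_nonneg v')
    have hzero := (Finset.sum_eq_zero_iff_of_nonneg hterm).mp hsum i (Finset.mem_univ i)
    have hq : star v' ⬝ᵥ (ρ i *ᵥ v') = 0 := by
      rcases mul_eq_zero.mp hzero with h | h
      · exact absurd h hci
      · exact h
    have hρv : ρ i *ᵥ v' = 0 := ((hρ i).dotProduct_mulVec_zero_iff v').mp hq
    apply (WithLp.equiv 2 (Fin d → ℂ)).injective
    simpa [hv'def, Matrix.toEuclideanLin_apply] using hρv
  -- W is the orthogonal complement of ker T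
  have hWeq : W = (LinearMap.ker T)ᗮ := by
    have hle : W ≤ (LinearMap.ker T)ᗮ := by
      rintro _ ⟨x, rfl⟩
      rw [Submodule.mem_orthogonal]
      intro u hu
      rw [← hsymT u x, LinearMap.mem_ker.mp hu, inner_zero_left]
    refine Submodule.eq_of_le_of_finrank_le hle ?_
    have h1 := Submodule.finrank_add_finrank_orthogonal (LinearMap.ker T)
    have h2 := LinearMap.finrank_range_add_finrank_ker T
    have h4 : Module.finrank ℂ ↥(LinearMap.range T) = Module.finrank ℂ ↥W := rfl
    rw [finrank_euclideanSpace_fin] at h1 h2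
    omega
  -- the target space of compressed matrices
  set Wm : Submodule ℂ (Matrix (Fin d) (Fin d) ℂ) :=
    LinearMap.ker (restr Wᗮ) ⊓ LinearMap.ker (offProj W ⊤) with hWmdef
  have hmemWm : ∀ i, c i ≠ 0 → ρ i ∈ Wm := by
    intro i hci
    have hsymρ : (Matrix.toEuclideanLin (ρ i)).IsSymmetric :=
      Matrix.isHermitian_iff_isSymmetric.mp (hρ i).1
    refine Submodule.mem_inf.mpr ⟨?_, ?_⟩
    · rw [LinearMap.mem_ker]
      apply LinearMap.ext
      rintro ⟨z, hz⟩
      rw [hWeq, Submodule.orthogonal_orthogonal] at hz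
      simpa using hkerker i hci hz
    · rw [LinearMap.mem_ker]
      apply LinearMap.ext
      rintro ⟨x, hx⟩
      rw [offProj_apply, LinearMap.zero_apply, Submodule.mkQ_apply,
        Submodule.Quotient.mk_eq_zero, hWeq, Submodule.mem_orthogonal]
      intro u hu
      rw [← hsymρ u, LinearMap.mem_ker.mp (hkerker i hci hu), inner_zero_left]
  have hWmdim : Module.finrank ℂ ↥Wm ≤ s * s := by
    have hinj : Function.Injective ((compress W) ∘ₗ Wm.subtype) := by
      rw [← LinearMap.ker_eq_bot, Submodule.eq_bot_iff]
      rintro ⟨x, hx1, hx2⟩ hx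
      rw [LinearMap.mem_ker] at hx
      have hL : Matrix.toEuclideanLin x = 0 := by
        apply LinearMap.ext
        intro v
        have hv : v ∈ W ⊔ Wᗮ := by
          rw [Submodule.sup_orthogonal_of_hasOrthogonalProjection]
          exact Submodule.mem_top
        obtain ⟨y, hy, z, hz, rfl⟩ := Submodule.mem_sup.mp hv
        rw [map_add, LinearMap.zero_apply]
        have hz0 : Matrix.toEuclideanLin x z = 0 := by
          have := congrFun (congrArg DFunLike.coe (LinearMap.mem_ker.mp hx1)) ⟨z, hz⟩
          simpa using this
        have hy0 : Matrix.toEuclideanLin x y = 0 := by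
          have hyW : Matrix.toEuclideanLin x y ∈ W := by
            have := congrFun (congrArg DFunLike.coe (LinearMap.mem_ker.mp hx2)) ⟨y, Submodule.mem_top⟩
            simpa [Submodule.Quotient.mk_eq_zero] using this
          have hproj : (W.orthogonalProjectionOnto (Matrix.toEuclideanLin x y) : EuclideanSpace ℂ (Fin d)) =
              Matrix.toEuclideanLin x y := by
                rw [Submodule.coe_orthogonalProjectionOnto_apply]
                exact Submodule.starProjection_eq_self_iff.mpr hyW
          have hcz : W.orthogonalProjectionOnto (Matrix.toEuclideanLin x y) = 0 := by
            have := congrFun (congrArg DFunLike.coe hx) ⟨y, hy⟩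
            simpa using this
          rw [← hproj, hcz]
          rfl
        rw [hy0, hz0, add_zero]
      have hx0 : x = 0 := Matrix.toEuclideanLin.injective (by rw [hL, map_zero])
      exact Subtype.ext hx0
    have hle := LinearMap.finrank_le_finrank_of_injective hinj
    rwa [Module.finrank_linearMap, hW] at hle
  -- the source space
  set V : Submodule ℂ (Matrix (Fin d) (Fin d) ℂ) := LinearMap.ker (offProj U Uᗮ) with hVdef
  have hVmem : ∀ X ∈ V, ∀ z, z ∈ Uᗮ → Matrix.toEuclideanLin X z ∈ U := by
    intro X hX z hz
    have := congrFun (congrArg DFunLike.coe (LinearMap.mem_ker.mp hX)) ⟨z, hz⟩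
    simpa [Submodule.Quotient.mk_eq_zero] using this
  -- main claim
  have hmain : ∀ X ∈ V, φ X ∈ Wm := by
    intro X hX
    rw [hφX X]
    refine Submodule.sum_mem _ fun i _ => ?_
    by_cases hci : c i = 0
    · have hEA : Em i * A = 0 := mul_eq_zero_of_trace_psd (hEm i) hA hci
      have hAE : A * Em i = 0 := by
        have h := congrArg Matrix.conjTranspose hEA
        rw [Matrix.conjTranspose_mul, (hEm i).1, hA.1, Matrix.conjTranspose_zero] at h
        exact h
      have hEU : ∀ u, u ∈ U → Matrix.toEuclideanLin (Em i) u = 0 := by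
        rintro _ ⟨x, rfl⟩
        rw [← LinearMap.comp_apply, ← toEuclideanLin_mul, hEA, map_zero, LinearMap.zero_apply]
      have hEperp : ∀ y, Matrix.toEuclideanLin (Em i) y ∈ Uᗮ := by
        intro y
        rw [Submodule.mem_orthogonal]
        rintro _ ⟨x, rfl⟩
        have hsymA : (Matrix.toEuclideanLin A).IsSymmetric :=
          Matrix.isHermitian_iff_isSymmetric.mp hA.1
        rw [hsymA, ← LinearMap.comp_apply, ← toEuclideanLin_mul, hAE, map_zero,
          LinearMap.zero_apply, inner_zero_right]
      have hnil : (Em i * X) * (Em i * X) = 0 := by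
        apply Matrix.toEuclideanLin.injective
        rw [map_zero, toEuclideanLin_mul, toEuclideanLin_mul]
        apply LinearMap.ext
        intro v
        rw [LinearMap.zero_apply, LinearMap.comp_apply, LinearMap.comp_apply,
          LinearMap.comp_apply]
        exact hEU _ (hVmem X hX _ (hEperp _))
      have htr : (Em i * X).trace = 0 := by
        have hn : IsNilpotent (Em i * X) := ⟨2, by rw [pow_two]; exact hnil⟩
        exact (Matrix.isNilpotent_trace_of_isNilpotent hn).eq_zero
      rw [htr, zero_smul]
      exact Submodule.zero_mem _
    · exact Submodule.smul_mem _ _ (hmemWm i hci)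
  -- dimension count
  have hVdim : d * d ≤ (Module.finrank ℂ ↥Uᗮ) *
      (Module.finrank ℂ (EuclideanSpace ℂ (Fin d) ⧸ U)) + Module.finrank ℂ ↥V := by
    have h1 := LinearMap.finrank_range_add_finrank_ker (offProj U Uᗮ)
    have h2 : Module.finrank ℂ (Matrix (Fin d) (Fin d) ℂ) = d * d := by
      rw [Module.finrank_matrix]
      simp
    have h3 := Submodule.finrank_le (LinearMap.range (offProj U Uᗮ))
    rw [Module.finrank_linearMap] at h3
    rw [← hVdef, h2] at h1
    omega
  set ψ : ↥V →ₗ[ℂ] Matrix (Fin d) (Fin d) ℂ := φ ∘ₗ V.subtype with hψdef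
  have h5 := LinearMap.finrank_range_add_finrank_ker ψ
  have hψrange : LinearMap.range ψ ≤ Wm := by
    rintro _ ⟨x, rfl⟩
    exact hmain x.1 x.2
  have h6 : Module.finrank ℂ ↥(LinearMap.range ψ) ≤ s * s :=
    le_trans (Submodule.finrank_mono hψrange) hWmdim
  have h7 : Module.finrank ℂ ↥(LinearMap.ker ψ) ≤ Module.finrank ℂ ↥(LinearMap.ker φ) := by
    have hker : ∀ x : ↥(LinearMap.ker ψ),
        (V.subtype ∘ₗ (LinearMap.ker ψ).subtype) x ∈ LinearMap.ker φ := by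
      rintro ⟨⟨x, hxV⟩, hxk⟩
      rw [LinearMap.mem_ker] at hxk ⊢
      exact hxk
    have hinj : Function.Injective (LinearMap.codRestrict (LinearMap.ker φ)
        (V.subtype ∘ₗ (LinearMap.ker ψ).subtype) hker) := by
      intro aa bb hab
      have h := congrArg Subtype.val hab
      apply Subtype.ext
      apply Subtype.ext
      simpa using h
    exact LinearMap.finrank_le_finrank_of_injective hinj
  have ha := Submodule.finrank_add_finrank_orthogonal U
  have hb := Submodule.finrank_quotient_add_finrank U
  rw [finrank_euclideanSpace_fin, hU] at ha hb
  set N := Module.finrank ℂ ↥(LinearMap.ker φ) with hN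
  set aa := Module.finrank ℂ ↥Uᗮ with haa
  set bb := Module.finrank ℂ (EuclideanSpace ℂ (Fin d) ⧸ U) with hbb
  have hd' : d = r + aa := by omega
  have hba : bb = aa := by omega
  have key : 2 * d * r ≤ r ^ 2 + s ^ 2 + N := by nlinarith [hVdim, h5, h6, h7]
  omega
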